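/- Let n be a positive integer and let s ∈ S_R(n). Then for every j with 1 ≤ j ≤ ⌊n/2⌋, the number of 1s in the prefix s_1…s_j differs from the number of 1s in the suffix s_{n+1−j}…s_n, i.e., wt(s_1…s_j) ≠ wt(s_{n+1−j}…s_n). -/

import Mathlib

/-- The composition of a binary string: the pair (number of 0s, number of 1s).
Here `false` represents the bit 0 and `true` the bit 1. -/
def comp (w : List Bool) : ℕ × ℕ := (w.count false, w.count true)

/-- The multiset of compositions of all contiguous substrings of `s` of length `l`. -/
def compLen (l : ℕ) (s : List Bool) : Multiset (ℕ × ℕ) :=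
  ↑((List.range (s.length + 1 - l)).map fun i => comp ((s.drop i).take l))

/-- The composition multiset `C(s)`: compositions of all contiguous substrings of `s`. -/
def compMS (s : List Bool) : Multiset (ℕ × ℕ) :=
  ↑((List.range s.length).flatMap fun i =>
    (List.range (s.length - i)).map fun j => comp ((s.drop i).take (j + 1)))

/-- A single composition error: one element `(z,w)` of `M` is replaced by a
pair `(z',w')` with the same length `z'+w' = z+w`. -/
def OneErr (M M' : Multiset (ℕ × ℕ)) : Prop :=
  ∃ z w z' w' : ℕ, (z, w) ∈ M ∧ z + w = z' + w' ∧
    M' = M - {(z, w)} + {(z', w')}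

/-- `AtMostErr t M D`: `D` is obtained from `M` by at most `t` composition errors. -/
def AtMostErr : ℕ → Multiset (ℕ × ℕ) → Multiset (ℕ × ℕ) → Prop
  | 0, M, D => M = D
  | t + 1, M, D => M = D ∨ ∃ M', OneErr M M' ∧ AtMostErr t M' D

/-- The sub-multiset of elements (compositions) of length `l`. -/
def lenPart (l : ℕ) (M : Multiset (ℕ × ℕ)) : Multiset (ℕ × ℕ) :=
  M.filter fun p => p.1 + p.2 = l

/-- `D` is the result of at most `t` *asymmetric* composition errors in `C(s)`,
for a string of length `n`: additionally, for each `1 ≤ i ≤ ⌊n/2⌋`, at most one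
of the two sub-multisets of lengths `i` and `n+1-i` is altered. -/
def AsymErr (t n : ℕ) (s : List Bool) (D : Multiset (ℕ × ℕ)) : Prop :=
  AtMostErr t (compMS s) D ∧
  ∀ i, 1 ≤ i → i ≤ n / 2 →
    lenPart i D ≠ compLen i s → lenPart (n + 1 - i) D = compLen (n + 1 - i) s

/-- A Catalan-Bertrand string: every nonempty prefix has strictly more 0s than 1s. -/
def IsCB (w : List Bool) : Prop :=
  ∀ j, 1 ≤ j → j ≤ w.length → (w.take j).count true < (w.take j).count false

/-- The reconstruction code `S_R(n)` for even `n`: `s_1 = 0`, `s_n = 1`, and the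
subsequence of `s` indexed by the positions `i ∈ {1,…,n/2}` with `s_i ≠ s_{n+1-i}`
(in increasing order) is a Catalan-Bertrand string (indices here are 0-based). -/
def SReven (n : ℕ) : Set (List Bool) :=
  { s | s.length = n ∧ s.getD 0 false = false ∧ s.getD (n - 1) false = true ∧
    IsCB (((List.range (n / 2)).filter fun i =>
        s.getD i false != s.getD (n - 1 - i) false).map fun i => s.getD i false) }

/-- The reconstruction code `S_R(n)`: for odd `n`, obtained from `S_R(n-1)` by
inserting an arbitrary middle bit. -/
def SR (n : ℕ) : Set (List Bool) :=
  if Even n then SReven n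
  else { s | ∃ v ∈ SReven (n - 1), ∃ b : Bool,
      s = v.take ((n - 1) / 2) ++ [b] ++ v.drop ((n - 1) / 2) }

/-- The cumulative weight `w_l(s)`: total number of 1s over all length-`l`
contiguous substrings of `s`. -/
def cumW (l : ℕ) (s : List Bool) : ℕ :=
  ∑ i ∈ Finset.range (s.length + 1 - l), ((s.drop i).take l).count true

/-- `σ_i(s) = s_i + s_{n+1-i}` for `1 ≤ i ≤ ⌊n/2⌋`, and `σ_{⌈n/2⌉}(s) = s_{⌈n/2⌉}`
for odd `n` (1-based indexing in the mathematical description). -/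
def sigmaSeq (s : List Bool) (i : ℕ) : ℕ :=
  if 2 * i ≤ s.length then
    (if s.getD (i - 1) false then 1 else 0) +
      (if s.getD (s.length - i) false then 1 else 0)
  else (if s.getD (i - 1) false then 1 else 0)

/-- Auxiliary: the filtered/mapped subsequence up to position `j`. -/
def Faux (s : List Bool) (j : ℕ) : List Bool :=
  ((List.range j).filter fun i =>
    s.getD i false != s.getD (s.length - 1 - i) false).map fun i => s.getD i false

lemma key_identity (s : List Bool) : ∀ j, j ≤ s.length →
    (s.take j).count true + (Faux s j).count false
      = (s.drop (s.length - j)).count true + (Faux s j).count true := by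
  intro j
  induction j with
  | zero => simp [Faux]
  | succ j ih =>
    intro hj
    have hjn : j < s.length := hj
    have ihj := ih (by omega)
    have h1 : s.take (j + 1) = s.take j ++ [s.getD j false] := by
      rw [List.take_succ, List.getD_eq_getElem _ _ hjn, List.getElem?_eq_getElem hjn]
      rfl
    have hidx : s.length - (j + 1) = s.length - 1 - j := by omega
    have hidx2 : s.length - 1 - j < s.length := by omega
    have h2 : s.drop (s.length - (j + 1))
        = s.getD (s.length - 1 - j) false :: s.drop (s.length - j) := by
      rw [hidx, List.drop_eq_getElem_cons hidx2, List.getD_eq_getElem _ _ hidx2]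
      congr 2
      omega
    have h3 : Faux s (j + 1) = Faux s j ++
        (bif (s.getD j false != s.getD (s.length - 1 - j) false)
          then [s.getD j false] else []) := by
      rw [Faux, Faux, List.range_succ, List.filter_append, List.map_append,
        List.filter_singleton]
      cases hc : (s.getD j false != s.getD (s.length - 1 - j) false) <;> simp [hc]
    rw [h1, h2, h3]
    cases hA : s.getD j false <;> cases hB : s.getD (s.length - 1 - j) false <;>
      simp [List.count_append, List.count_cons] <;> omega

lemma even_lt (n : ℕ) (s : List Bool) (hs : s ∈ SReven n) (j : ℕ)
    (h1 : 1 ≤ j) (h2 : j ≤ n / 2) :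
    (s.take j).count true < (s.drop (n - j)).count true := by
  obtain ⟨hlen, h0, hlast, hcb⟩ := hs
  subst hlen
  have hcb' : IsCB (Faux s (s.length / 2)) := hcb
  have hpre : Faux s j <+: Faux s (s.length / 2) := by
    have hr : List.range j <+: List.range (s.length / 2) := by
      have : (List.range (s.length / 2)).take j = List.range j := by
        rw [List.take_range, Nat.min_eq_left h2]
      exact this ▸ List.take_prefix _ _
    exact ((hr.filter _).map _)
  obtain ⟨t, ht⟩ := hpre
  have hne : 0 < (Faux s j).length := by
    have h0mem : (0 : ℕ) ∈ (List.range j).filter fun i =>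
        s.getD i false != s.getD (s.length - 1 - i) false := by
      simp only [List.mem_filter, List.mem_range, Nat.sub_zero, h0, hlast]
      exact ⟨h1, rfl⟩
    have hm : s.getD 0 false ∈ Faux s j := List.mem_map_of_mem h0mem
    exact List.length_pos_iff.mpr (List.ne_nil_of_mem hm)
  have hlelen : (Faux s j).length ≤ (Faux s (s.length / 2)).length := by
    rw [← ht, List.length_append]; omega
  have hcb2 := hcb' (Faux s j).length hne hlelen
  have htake : (Faux s (s.length / 2)).take (Faux s j).length = Faux s j := by
    rw [← ht, List.take_left]
  rw [htake] at hcb2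
  have hkey := key_identity s j (le_trans h2 (Nat.div_le_self _ _))
  omega

/-- For `s ∈ S_R(n)` and every `1 ≤ j ≤ ⌊n/2⌋`, the weight of the
prefix of length `j` differs from the weight of the suffix of length `j`. -/
theorem SR_prefix_suffix_weight_ne (n : ℕ) (hn : 1 ≤ n)
    (s : List Bool) (hs : s ∈ SR n) :
    ∀ j, 1 ≤ j → j ≤ n / 2 →
      (s.take j).count true ≠ (s.drop (n - j)).count true := by
  intro j hj1 hj2
  unfold SR at hs
  by_cases he : Even n
  · rw [if_pos he] at hs
    exact (even_lt n s hs j hj1 hj2).ne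
  · rw [if_neg he] at hs
    obtain ⟨v, hv, b, hsb⟩ := hs
    have hvlen : v.length = n - 1 := hv.1
    have hodd : n % 2 = 1 := Nat.odd_iff.mp (Nat.not_even_iff_odd.mp he)
    set m := (n - 1) / 2 with hm
    have hjm : j ≤ m := by omega
    have hmv : m ≤ v.length := by omega
    have hlen1 : (v.take m).length = m := by
      rw [List.length_take]; omega
    have ht : s.take j = v.take j := by
      subst hsb
      rw [List.take_append_of_le_length (by simp [hlen1]; omega),
        List.take_append_of_le_length (by omega : j ≤ (v.take m).length),
        List.take_take, Nat.min_eq_left hjm]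
    have hd : s.drop (n - j) = v.drop (n - 1 - j) := by
      subst hsb
      have hsplit : n - j = (v.take m ++ [b]).length + (n - 1 - j - m) := by
        simp only [List.length_append, hlen1, List.length_singleton]
        omega
      rw [hsplit, List.drop_length_add_append, List.drop_drop]
      congr 1
      omega
    rw [ht, hd]
    have hlt := even_lt (n - 1) v hv j hj1 (by omega)
    exact hlt.ne
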